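/- Starting from any valid instance and executing the spanning forest primitive of the Universal Coating algorithm, within O(n) asynchronous rounds every particle has left the idle state and the particles form a spanning forest (every particle is a root adjacent to the object or a retired particle, or a follower whose parent pointer leads toward such a root). In particular, in every round at least one idle particle becomes active, so at most n rounds are needed until all n particles have joined the spanning forest. -/
import Mathlib


/-- Nodes of the infinite regular triangular grid, realized on `ℤ × ℤ`. -/
abbrev Node : Type := ℤ × ℤ

/-- The infinite regular triangular grid graph `G_eqt`. -/
def Geqt : SimpleGraph Node :=
  SimpleGraph.fromRel (fun u v =>
    (v.1 - u.1, v.2 - u.2) ∈ ({(1, 0), (0, 1), (1, -1)} : Set (ℤ × ℤ)))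

/-- Graph distance in the triangular grid. -/
noncomputable def gdist (u v : Node) : ℕ := Geqt.dist u v

/-- Distance from a node to a set of nodes. -/
noncomputable def gdistSet (v : Node) (U : Set Node) : ℕ := sInf (gdist v '' U)

/-- A coating instance: the initial (contracted) particle positions and an object. -/
structure Instance where
  particles : Set Node
  object : Set Node

/-- Layer `i`: the set of nodes at distance `i` from the object. -/
def layer (O : Set Node) (i : ℕ) : Set Node := {v | gdistSet v O = i}

/-- `B O i` is the number of nodes in layer `i`. -/
noncomputable def B (O : Set Node) (i : ℕ) : ℕ := (layer O i).ncard

/-- The subgraph of `G_eqt` induced by `S` is connected. -/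
def connectedSet (S : Set Node) : Prop := (Geqt.induce S).Connected

/-- `S` is `k`-connected: removing fewer than `k` nodes leaves it connected. -/
def kConnectedSet (k : ℕ) (S : Set Node) : Prop :=
  ∀ D : Set Node, D ⊆ S → D.Finite → D.ncard < k → connectedSet (S \ D)

/-- A valid instance for the universal coating problem: finitely many particles,
all initially contracted (and idle), a single connected object, the particle
system connected to the object, no holes in the object, and no narrow tunnels. -/
def ValidInstance (I : Instance) : Prop :=
  I.particles.Finite ∧ I.particles.Nonempty ∧
  I.particles ∩ I.object = ∅ ∧
  connectedSet I.object ∧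
  connectedSet (I.particles ∪ I.object) ∧
  connectedSet I.objectᶜ ∧
  kConnectedSet (2 * (⌈(I.particles.ncard : ℚ) / (B I.object 1 : ℚ)⌉₊ + 1)) I.objectᶜ

/-- A set of occupied nodes is a legal coating configuration: every unoccupied
non-object node is at least as far from the object as every occupied node. -/
def legal (I : Instance) (S : Set Node) : Prop :=
  ∀ v, v ∉ I.object → v ∉ S → ∀ w ∈ S, gdistSet w I.object ≤ gdistSet v I.object

/-- The particles of an instance, as a type. -/
abbrev Pt (I : Instance) : Type := {v : Node // v ∈ I.particles}

/-- The states a particle can have during the spanning forest primitive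
(no particle is retired during this phase). -/
inductive PState : Type
  | idle | follower | root
deriving DecidableEq

/-- On a walk from a vertex not satisfying `P` to one satisfying `P`,
there is an edge crossing the boundary. -/
lemma exists_boundary_edge {V : Type*} {G : SimpleGraph V} (P : V → Prop)
    {a b : V} (w : G.Walk a b) (ha : ¬ P a) (hb : P b) :
    ∃ u v, G.Adj u v ∧ ¬ P u ∧ P v := by
  induction w with
  | nil => exact absurd hb ha
  | @cons x y z h w ih =>
    by_cases hy : P y
    · exact ⟨x, y, h, ha, hy⟩
    · exact ih hy hb

/-- Starting from any valid instance and executing the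
spanning forest primitive of the Universal Coating algorithm — an idle
particle becomes a root when it is adjacent to the object, becomes a follower
with a parent pointer to a root or follower neighbor when it has one, and
stays idle otherwise; each round every particle is activated at least once —
within `O(n)` asynchronous rounds every particle has left the idle state and
the particles form a spanning forest: every particle is a root adjacent to
the object, or a follower whose (acyclic) parent pointer leads toward such a
root.  In particular, in every round at least one idle particle becomes
active, so at most `n` rounds are needed until all `n` particles have joined
the spanning forest. -/
theorem stmt8 (I : Instance) (hI : ValidInstance I)
    (state : ℕ → Pt I → PState) (par : ℕ → Pt I → Option (Pt I))
    (h0 : ∀ p, state 0 p = PState.idle)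
    (hmonotone : ∀ i p, state i p ≠ PState.idle → state (i + 1) p ≠ PState.idle)
    (hactivate : ∀ i p,
      ((∃ o ∈ I.object, Geqt.Adj p.1 o) ∨
        ∃ q, Geqt.Adj p.1 q.1 ∧ state i q ≠ PState.idle) →
      state (i + 1) p ≠ PState.idle)
    (hidle : ∀ i p, state (i + 1) p ≠ PState.idle →
      state i p ≠ PState.idle ∨ (∃ o ∈ I.object, Geqt.Adj p.1 o) ∨
        ∃ q, Geqt.Adj p.1 q.1 ∧ state i q ≠ PState.idle)
    (hroot : ∀ i p, state i p = PState.root → ∃ o ∈ I.object, Geqt.Adj p.1 o)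
    (hfollower : ∀ i p, state i p = PState.follower →
      ∃ q, par i p = some q ∧ Geqt.Adj p.1 q.1 ∧ state i q ≠ PState.idle)
    (hforest : ∀ i, ∃ rank : Pt I → ℕ, ∀ p q, par i p = some q → rank p < rank q) :
    (∀ i, (∃ p, state i p = PState.idle) →
      ∃ p, state i p = PState.idle ∧ state (i + 1) p ≠ PState.idle) ∧
    (∀ i, I.particles.ncard ≤ i → ∀ p,
      (state i p = PState.root ∧ ∃ o ∈ I.object, Geqt.Adj p.1 o) ∨
      (state i p = PState.follower ∧
        ∃ q, par i p = some q ∧ Geqt.Adj p.1 q.1 ∧ state i q ≠ PState.idle)) := by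
  obtain ⟨hfin, hne, hdisj, hobjconn, hconn, _, _⟩ := hI
  haveI : Finite (Pt I) := hfin.to_subtype
  -- object nonempty
  obtain ⟨o, ho⟩ : ∃ o, o ∈ I.object := by
    obtain ⟨⟨o, ho⟩⟩ := hobjconn.nonempty
    exact ⟨o, ho⟩
  -- Part 1
  have part1 : ∀ i, (∃ p, state i p = PState.idle) →
      ∃ p, state i p = PState.idle ∧ state (i + 1) p ≠ PState.idle := by
    intro i ⟨p, hp⟩
    -- property: in object, or a non-idle particle
    set T : Node → Prop := fun v =>
      v ∈ I.object ∨ ∃ q : Pt I, q.1 = v ∧ state i q ≠ PState.idle with hT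
    have hpS : p.1 ∈ I.particles ∪ I.object := Or.inl p.2
    have hoS : o ∈ I.particles ∪ I.object := Or.inr ho
    have hpnotobj : p.1 ∉ I.object := fun h =>
      Set.eq_empty_iff_forall_notMem.mp hdisj p.1 ⟨p.2, h⟩
    have hpT : ¬ T p.1 := by
      rintro (h | ⟨q, hq, hqne⟩)
      · exact hpnotobj h
      · exact hqne (by rwa [show q = p from Subtype.ext hq])
    have hoT : T o := Or.inl ho
    obtain ⟨w⟩ := hconn.preconnected ⟨p.1, hpS⟩ ⟨o, hoS⟩
    obtain ⟨u, v, hadj, hu, hv⟩ :=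
      exists_boundary_edge (fun x : ↥(I.particles ∪ I.object) => T x.1)
        w hpT hoT
    have hadj' : Geqt.Adj u.1 v.1 := hadj
    have huP : u.1 ∈ I.particles := by
      rcases u.2 with h | h
      · exact h
      · exact absurd (Or.inl h : T u.1) hu
    set pu : Pt I := ⟨u.1, huP⟩ with hpu
    have hpuidle : state i pu = PState.idle := by
      by_contra h
      exact hu (Or.inr ⟨pu, rfl, h⟩)
    refine ⟨pu, hpuidle, hactivate i pu ?_⟩
    rcases hv with h | ⟨q, hq, hqne⟩
    · exact Or.inl ⟨v.1, h, hadj'⟩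
    · exact Or.inr ⟨q, by rw [hq]; exact hadj', hqne⟩
  refine ⟨part1, ?_⟩
  -- Part 2: count of idle particles decreases
  set f : ℕ → ℕ := fun i => {q : Pt I | state i q = PState.idle}.ncard with hf
  have hsub : ∀ i, {q : Pt I | state (i+1) q = PState.idle} ⊆
      {q : Pt I | state i q = PState.idle} := by
    intro i q hq
    by_contra h
    exact hmonotone i q h hq
  have hbound : ∀ i, f i + i ≤ I.particles.ncard ∨ f i = 0 := by
    intro i
    induction i with
    | zero =>
      left
      have : f 0 ≤ (Set.univ : Set (Pt I)).ncard :=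
        Set.ncard_le_ncard (Set.subset_univ _) Set.finite_univ
      rw [Set.ncard_univ] at this
      have hcard : Nat.card (Pt I) = I.particles.ncard := Nat.card_coe_set_eq _
      omega
    | succ i ih =>
      by_cases hz : f i = 0
      · right
        have : {q : Pt I | state (i+1) q = PState.idle} = ∅ := by
          have hie : {q : Pt I | state i q = PState.idle} = ∅ :=
            (Set.ncard_eq_zero (Set.toFinite _)).mp hz
          exact Set.subset_eq_empty (hie ▸ hsub i) rfl
        simp [hf, this]
      · have hpos : ∃ q, state i q = PState.idle := by
          by_contra h
          push_neg at h
          have he : {q : Pt I | state i q = PState.idle} = ∅ :=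
            Set.eq_empty_iff_forall_notMem.mpr h
          exact hz (by simp [hf, he])
        obtain ⟨q, hq1, hq2⟩ := part1 i hpos
        have hss : {r : Pt I | state (i+1) r = PState.idle} ⊂
            {r : Pt I | state i r = PState.idle} :=
          ⟨hsub i, fun h => hq2 (h hq1)⟩
        have hlt : f (i+1) < f i := Set.ncard_lt_ncard hss (Set.toFinite _)
        rcases ih with h | h
        · left; omega
        · omega
  intro i hi p
  have hnidle : state i p ≠ PState.idle := by
    intro h
    have : p ∈ {q : Pt I | state i q = PState.idle} := h
    have hfpos : 0 < f i := (Set.ncard_pos (Set.toFinite _)).mpr ⟨p, this⟩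
    rcases hbound i with hb | hb <;> omega
  cases hst : state i p with
  | idle => exact absurd hst hnidle
  | root => exact Or.inl ⟨rfl, hroot i p hst⟩
  | follower => exact Or.inr ⟨rfl, hfollower i p hst⟩
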